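/- Suppose sequences of random elements (X_n) in E_1 and (Y_n) in E_2 satisfy: for all measurable A ⊆ E_1, B ⊆ E_2, |P{X_n ∈ A, Y_n ∈ B} − P{X_n ∈ A}P{Y_n ∈ B}| → 0 (condition AI-2). Then for all bounded uniformly continuous f : E_1 → ℝ and g : E_2 → ℝ, E[f(X_n)g(Y_n)] − E[f(X_n)]·E[g(Y_n)] → 0 (condition AI-0). -/

import Mathlib

open MeasureTheory Filter

lemma sum_ind_eq' {α : Type*} (h : α → ℤ) (c : ℤ → ℝ) (K : Finset ℤ) (a : α)
    (hK : h a ∈ K) :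
    ∑ k ∈ K, Set.indicator {x | h x = k} (fun _ => c k) a = c (h a) := by
  rw [Finset.sum_eq_single_of_mem (h a) hK]
  · exact Set.indicator_of_mem rfl _
  · intro k _ hk
    exact Set.indicator_of_notMem (fun hx => hk (Eq.symm hx)) _

lemma abs_sub_floor_mul_le {t δ : ℝ} (hδ : 0 < δ) : |t - δ * ⌊t / δ⌋| ≤ δ := by
  have h1 : (⌊t/δ⌋ : ℝ) ≤ t/δ := Int.floor_le _
  have h2 : t/δ - 1 < (⌊t/δ⌋ : ℝ) := Int.sub_one_lt_floor _
  have h1' : (⌊t/δ⌋ : ℝ) * δ ≤ t := (le_div_iff₀ hδ).mp h1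
  have h2' : t < ((⌊t/δ⌋ : ℝ) + 1) * δ := (div_lt_iff₀ hδ).mp (by linarith)
  rw [abs_le]
  constructor <;> nlinarith

lemma abs_mul_sub_mul' {a b a' b' C D δ : ℝ} (ha : |a| ≤ C) (hb' : |b'| ≤ D)
    (h1 : |a - a'| ≤ δ) (h2 : |b - b'| ≤ δ) : |a * b - a' * b'| ≤ C * δ + δ * D := by
  have he : a * b - a' * b' = a * (b - b') + (a - a') * b' := by ring
  rw [he]
  refine (abs_add_le _ _).trans ?_
  rw [abs_mul, abs_mul]
  exact add_le_add (mul_le_mul ha h2 (abs_nonneg _) ((abs_nonneg _).trans ha))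
    (mul_le_mul h1 hb' (abs_nonneg _) ((abs_nonneg _).trans h1))

theorem stmt_9 {Ω E₁ E₂ : Type*} [MeasurableSpace Ω]
    [MetricSpace E₁] [MeasurableSpace E₁] [BorelSpace E₁]
    [MetricSpace E₂] [MeasurableSpace E₂] [BorelSpace E₂]
    (P : Measure Ω) [IsProbabilityMeasure P]
    (X : ℕ → Ω → E₁) (Y : ℕ → Ω → E₂)
    (hX : ∀ n, Measurable (X n)) (hY : ∀ n, Measurable (Y n))
    (hAI2 : ∀ A : Set E₁, ∀ B : Set E₂, MeasurableSet A → MeasurableSet B →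
      Tendsto (fun n =>
          (P {ω | X n ω ∈ A ∧ Y n ω ∈ B}).toReal
            - (P {ω | X n ω ∈ A}).toReal * (P {ω | Y n ω ∈ B}).toReal)
        atTop (nhds 0)) :
    ∀ f : E₁ → ℝ, ∀ g : E₂ → ℝ,
      UniformContinuous f → UniformContinuous g →
      (∃ C, ∀ x, |f x| ≤ C) → (∃ C, ∀ y, |g y| ≤ C) →
      Tendsto (fun n =>
          (∫ ω, f (X n ω) * g (Y n ω) ∂P)
            - (∫ ω, f (X n ω) ∂P) * (∫ ω, g (Y n ω) ∂P))
        atTop (nhds 0) := by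
  rintro f g hf hg ⟨C₁, hC₁⟩ ⟨C₂, hC₂⟩
  have hΩ : Nonempty Ω := by
    by_contra h
    rw [not_nonempty_iff] at h
    have h1 := measure_univ (μ := P)
    rw [Set.univ_eq_empty_iff.mpr h, measure_empty] at h1
    exact zero_ne_one h1
  have hC₁0 : 0 ≤ C₁ := (abs_nonneg _).trans (hC₁ (X 0 (Classical.choice hΩ)))
  have hC₂0 : 0 ≤ C₂ := (abs_nonneg _).trans (hC₂ (Y 0 (Classical.choice hΩ)))
  have hfm : Measurable f := hf.continuous.measurable
  have hgm : Measurable g := hg.continuous.measurable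
  rw [NormedAddCommGroup.tendsto_nhds_zero]
  intro ε hε
  set δ : ℝ := min 1 (ε / (4 * (C₁ + C₂ + 1))) with hδdef
  have hδpos : 0 < δ := lt_min one_pos (div_pos hε (by positivity))
  have hδ1 : δ ≤ 1 := min_le_left _ _
  have hδ2 : δ * (4 * (C₁ + C₂ + 1)) ≤ ε := by
    rw [← le_div_iff₀ (by positivity)]
    exact min_le_right _ _
  -- discretizations
  set φ : E₁ → ℝ := fun x => δ * ⌊f x / δ⌋ with hφdef
  set ψ : E₂ → ℝ := fun y => δ * ⌊g y / δ⌋ with hψdef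
  have hφf : ∀ x, |f x - φ x| ≤ δ := fun x => abs_sub_floor_mul_le hδpos
  have hψg : ∀ y, |g y - ψ y| ≤ δ := fun y => abs_sub_floor_mul_le hδpos
  have hφb : ∀ x, |φ x| ≤ C₁ + δ := by
    intro x
    have h1 := abs_le.mp (hφf x)
    have h2 := abs_le.mp (hC₁ x)
    rw [abs_le]; constructor <;> linarith
  have hψb : ∀ y, |ψ y| ≤ C₂ + δ := by
    intro y
    have h1 := abs_le.mp (hψg y)
    have h2 := abs_le.mp (hC₂ y)
    rw [abs_le]; constructor <;> linarith
  have hφm : Measurable φ :=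
    measurable_const.mul ((measurable_from_top (f := (Int.cast : ℤ → ℝ))).comp
      ((hfm.div_const δ).floor))
  have hψm : Measurable ψ :=
    measurable_const.mul ((measurable_from_top (f := (Int.cast : ℤ → ℝ))).comp
      ((hgm.div_const δ).floor))
  set A : ℤ → Set E₁ := fun k => {x | ⌊f x / δ⌋ = k} with hAdef
  set B : ℤ → Set E₂ := fun l => {y | ⌊g y / δ⌋ = l} with hBdef
  have hAmeas : ∀ k, MeasurableSet (A k) := fun k =>
    (hfm.div_const δ).floor (measurableSet_singleton k)
  have hBmeas : ∀ l, MeasurableSet (B l) := fun l =>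
    (hgm.div_const δ).floor (measurableSet_singleton l)
  set K₁ : Finset ℤ := Finset.Icc ⌊-C₁/δ⌋ ⌊C₁/δ⌋ with hK₁def
  set K₂ : Finset ℤ := Finset.Icc ⌊-C₂/δ⌋ ⌊C₂/δ⌋ with hK₂def
  have hK₁ : ∀ x, ⌊f x / δ⌋ ∈ K₁ := by
    intro x
    rw [hK₁def, Finset.mem_Icc]
    have h2 := abs_le.mp (hC₁ x)
    exact ⟨Int.floor_le_floor ((div_le_div_iff_of_pos_right hδpos).mpr h2.1),
      Int.floor_le_floor ((div_le_div_iff_of_pos_right hδpos).mpr h2.2)⟩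
  have hK₂ : ∀ y, ⌊g y / δ⌋ ∈ K₂ := by
    intro y
    rw [hK₂def, Finset.mem_Icc]
    have h2 := abs_le.mp (hC₂ y)
    exact ⟨Int.floor_le_floor ((div_le_div_iff_of_pos_right hδpos).mpr h2.1),
      Int.floor_le_floor ((div_le_div_iff_of_pos_right hδpos).mpr h2.2)⟩
  have hAΩ : ∀ n k, MeasurableSet {ω | X n ω ∈ A k} := fun n k => (hX n) (hAmeas k)
  have hBΩ : ∀ n l, MeasurableSet {ω | Y n ω ∈ B l} := fun n l => (hY n) (hBmeas l)
  have hABΩ : ∀ n k l, MeasurableSet {ω | X n ω ∈ A k ∧ Y n ω ∈ B l} := fun n k l =>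
    (hAΩ n k).inter (hBΩ n l)
  -- the discretized covariance
  set S : ℕ → ℝ := fun n => ∑ k ∈ K₁, ∑ l ∈ K₂, ((δ*(k:ℝ))*(δ*(l:ℝ))) *
      ((P {ω | X n ω ∈ A k ∧ Y n ω ∈ B l}).toReal
        - (P {ω | X n ω ∈ A k}).toReal * (P {ω | Y n ω ∈ B l}).toReal) with hSdef
  have hS : Tendsto S atTop (nhds 0) := by
    have h0 : Tendsto S atTop (nhds (∑ k ∈ K₁, ∑ l ∈ K₂, ((δ*(k:ℝ))*(δ*(l:ℝ))) * 0)) := by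
      apply tendsto_finset_sum
      intro k _
      apply tendsto_finset_sum
      intro l _
      exact (hAI2 (A k) (B l) (hAmeas k) (hBmeas l)).const_mul _
    simpa using h0
  -- integral identities
  have e2 : ∀ n, ∫ ω, φ (X n ω) ∂P = ∑ k ∈ K₁, (δ*(k:ℝ)) * (P {ω | X n ω ∈ A k}).toReal := by
    intro n
    have hpt : ∀ ω, φ (X n ω)
        = ∑ k ∈ K₁, Set.indicator {ω' | X n ω' ∈ A k} (fun _ => δ*(k:ℝ)) ω :=
      fun ω => (sum_ind_eq' (fun ω' => ⌊f (X n ω') / δ⌋) (fun k => δ*(k:ℝ)) K₁ ω (hK₁ _)).symm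
    rw [integral_congr_ae (Filter.Eventually.of_forall hpt),
      integral_finset_sum _ (fun k _ => (integrable_const _).indicator (hAΩ n k))]
    refine Finset.sum_congr rfl fun k _ => ?_
    rw [integral_indicator_const _ (hAΩ n k), smul_eq_mul, mul_comm]
    rfl
  have e3 : ∀ n, ∫ ω, ψ (Y n ω) ∂P = ∑ l ∈ K₂, (δ*(l:ℝ)) * (P {ω | Y n ω ∈ B l}).toReal := by
    intro n
    have hpt : ∀ ω, ψ (Y n ω)
        = ∑ l ∈ K₂, Set.indicator {ω' | Y n ω' ∈ B l} (fun _ => δ*(l:ℝ)) ω :=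
      fun ω => (sum_ind_eq' (fun ω' => ⌊g (Y n ω') / δ⌋) (fun l => δ*(l:ℝ)) K₂ ω (hK₂ _)).symm
    rw [integral_congr_ae (Filter.Eventually.of_forall hpt),
      integral_finset_sum _ (fun l _ => (integrable_const _).indicator (hBΩ n l))]
    refine Finset.sum_congr rfl fun l _ => ?_
    rw [integral_indicator_const _ (hBΩ n l), smul_eq_mul, mul_comm]
    rfl
  have e1 : ∀ n, ∫ ω, φ (X n ω) * ψ (Y n ω) ∂P
      = ∑ k ∈ K₁, ∑ l ∈ K₂, ((δ*(k:ℝ))*(δ*(l:ℝ)))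
          * (P {ω | X n ω ∈ A k ∧ Y n ω ∈ B l}).toReal := by
    intro n
    have hpt : ∀ ω, φ (X n ω) * ψ (Y n ω)
        = ∑ k ∈ K₁, ∑ l ∈ K₂,
            Set.indicator {ω' | X n ω' ∈ A k ∧ Y n ω' ∈ B l}
              (fun _ => (δ*(k:ℝ))*(δ*(l:ℝ))) ω := by
      intro ω
      have h1 := sum_ind_eq' (fun ω' => ⌊f (X n ω') / δ⌋) (fun k => δ*(k:ℝ)) K₁ ω (hK₁ _)
      have h2 := sum_ind_eq' (fun ω' => ⌊g (Y n ω') / δ⌋) (fun l => δ*(l:ℝ)) K₂ ω (hK₂ _)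
      calc φ (X n ω) * ψ (Y n ω)
          = (∑ k ∈ K₁, Set.indicator {ω' | X n ω' ∈ A k} (fun _ => δ*(k:ℝ)) ω)
            * (∑ l ∈ K₂, Set.indicator {ω' | Y n ω' ∈ B l} (fun _ => δ*(l:ℝ)) ω) :=
              (congrArg₂ (fun a b => a * b) h1 h2).symm
        _ = ∑ k ∈ K₁, ∑ l ∈ K₂,
              Set.indicator {ω' | X n ω' ∈ A k} (fun _ => δ*(k:ℝ)) ω *
              Set.indicator {ω' | Y n ω' ∈ B l} (fun _ => δ*(l:ℝ)) ω :=
            Finset.sum_mul_sum _ _ _ _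
        _ = _ := Finset.sum_congr rfl fun k _ => Finset.sum_congr rfl fun l _ =>
              (Set.inter_indicator_mul _ _ _).symm
    rw [integral_congr_ae (Filter.Eventually.of_forall hpt),
      integral_finset_sum _ (fun k _ =>
        integrable_finset_sum _ (fun l _ => (integrable_const _).indicator (hABΩ n k l)))]
    refine Finset.sum_congr rfl fun k _ => ?_
    rw [integral_finset_sum _ (fun l _ => (integrable_const _).indicator (hABΩ n k l))]
    refine Finset.sum_congr rfl fun l _ => ?_
    rw [integral_indicator_const _ (hABΩ n k l), smul_eq_mul, mul_comm]
    rfl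
  have hScov : ∀ n, S n = (∫ ω, φ (X n ω) * ψ (Y n ω) ∂P)
      - (∫ ω, φ (X n ω) ∂P) * (∫ ω, ψ (Y n ω) ∂P) := by
    intro n
    rw [e1 n, e2 n, e3 n, hSdef, Finset.sum_mul_sum, ← Finset.sum_sub_distrib]
    refine Finset.sum_congr rfl fun k _ => ?_
    rw [← Finset.sum_sub_distrib]
    refine Finset.sum_congr rfl fun l _ => ?_
    ring
  -- integrability
  have bdd_int : ∀ {h : Ω → ℝ}, Measurable h → ∀ c : ℝ, (∀ ω, |h ω| ≤ c) → Integrable h P := by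
    intro h hm c hc
    exact (integrable_const c).mono' hm.aestronglyMeasurable
      (Filter.Eventually.of_forall (by simpa [Real.norm_eq_abs] using hc))
  have intf : ∀ n, Integrable (fun ω => f (X n ω)) P := fun n =>
    bdd_int (hfm.comp (hX n)) C₁ (fun ω => hC₁ _)
  have intg : ∀ n, Integrable (fun ω => g (Y n ω)) P := fun n =>
    bdd_int (hgm.comp (hY n)) C₂ (fun ω => hC₂ _)
  have intφ : ∀ n, Integrable (fun ω => φ (X n ω)) P := fun n =>
    bdd_int (hφm.comp (hX n)) (C₁+δ) (fun ω => hφb _)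
  have intψ : ∀ n, Integrable (fun ω => ψ (Y n ω)) P := fun n =>
    bdd_int (hψm.comp (hY n)) (C₂+δ) (fun ω => hψb _)
  have intfg : ∀ n, Integrable (fun ω => f (X n ω) * g (Y n ω)) P := fun n =>
    bdd_int ((hfm.comp (hX n)).mul (hgm.comp (hY n))) (C₁*C₂) (fun ω => by
      rw [abs_mul]
      exact mul_le_mul (hC₁ _) (hC₂ _) (abs_nonneg _) hC₁0)
  have intφψ : ∀ n, Integrable (fun ω => φ (X n ω) * ψ (Y n ω)) P := fun n =>
    bdd_int ((hφm.comp (hX n)).mul (hψm.comp (hY n))) ((C₁+δ)*(C₂+δ)) (fun ω => by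
      rw [abs_mul]
      exact mul_le_mul (hφb _) (hψb _) (abs_nonneg _) (by linarith))
  -- error bound
  have hclose : ∀ n, |((∫ ω, f (X n ω) * g (Y n ω) ∂P)
      - (∫ ω, f (X n ω) ∂P) * (∫ ω, g (Y n ω) ∂P)) - S n| ≤ ε/2 := by
    intro n
    rw [hScov n]
    have t1 : |(∫ ω, f (X n ω) * g (Y n ω) ∂P) - ∫ ω, φ (X n ω) * ψ (Y n ω) ∂P|
        ≤ C₁*δ + δ*(C₂+δ) := by
      rw [← integral_sub (intfg n) (intφψ n)]
      have hb : ∀ ω, ‖f (X n ω) * g (Y n ω) - φ (X n ω) * ψ (Y n ω)‖ ≤ C₁*δ + δ*(C₂+δ) := by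
        intro ω
        rw [Real.norm_eq_abs]
        exact abs_mul_sub_mul' (hC₁ _) (hψb _) (hφf _) (hψg _)
      have h := norm_integral_le_of_norm_le_const (μ := P) (Filter.Eventually.of_forall hb)
      simpa [Real.norm_eq_abs, measure_univ] using h
    have t2f : |(∫ ω, f (X n ω) ∂P) - ∫ ω, φ (X n ω) ∂P| ≤ δ := by
      rw [← integral_sub (intf n) (intφ n)]
      have hb : ∀ ω, ‖f (X n ω) - φ (X n ω)‖ ≤ δ := fun ω => by
        rw [Real.norm_eq_abs]; exact hφf _
      have h := norm_integral_le_of_norm_le_const (μ := P) (Filter.Eventually.of_forall hb)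
      simpa [Real.norm_eq_abs, measure_univ] using h
    have t2g : |(∫ ω, g (Y n ω) ∂P) - ∫ ω, ψ (Y n ω) ∂P| ≤ δ := by
      rw [← integral_sub (intg n) (intψ n)]
      have hb : ∀ ω, ‖g (Y n ω) - ψ (Y n ω)‖ ≤ δ := fun ω => by
        rw [Real.norm_eq_abs]; exact hψg _
      have h := norm_integral_le_of_norm_le_const (μ := P) (Filter.Eventually.of_forall hb)
      simpa [Real.norm_eq_abs, measure_univ] using h
    have hIf : |∫ ω, f (X n ω) ∂P| ≤ C₁ := by
      have hb : ∀ ω, ‖f (X n ω)‖ ≤ C₁ := fun ω => by rw [Real.norm_eq_abs]; exact hC₁ _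
      have h := norm_integral_le_of_norm_le_const (μ := P) (Filter.Eventually.of_forall hb)
      simpa [Real.norm_eq_abs, measure_univ] using h
    have hIψ : |∫ ω, ψ (Y n ω) ∂P| ≤ C₂ + δ := by
      have hb : ∀ ω, ‖ψ (Y n ω)‖ ≤ C₂ + δ := fun ω => by rw [Real.norm_eq_abs]; exact hψb _
      have h := norm_integral_le_of_norm_le_const (μ := P) (Filter.Eventually.of_forall hb)
      simpa [Real.norm_eq_abs, measure_univ] using h
    have t2 : |(∫ ω, f (X n ω) ∂P) * (∫ ω, g (Y n ω) ∂P)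
        - (∫ ω, φ (X n ω) ∂P) * (∫ ω, ψ (Y n ω) ∂P)| ≤ C₁*δ + δ*(C₂+δ) :=
      abs_mul_sub_mul' hIf hIψ t2f t2g
    have hsplit : ((∫ ω, f (X n ω) * g (Y n ω) ∂P)
          - (∫ ω, f (X n ω) ∂P) * (∫ ω, g (Y n ω) ∂P))
        - ((∫ ω, φ (X n ω) * ψ (Y n ω) ∂P)
          - (∫ ω, φ (X n ω) ∂P) * (∫ ω, ψ (Y n ω) ∂P))
        = ((∫ ω, f (X n ω) * g (Y n ω) ∂P) - ∫ ω, φ (X n ω) * ψ (Y n ω) ∂P)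
          + -(((∫ ω, f (X n ω) ∂P) * (∫ ω, g (Y n ω) ∂P))
            - (∫ ω, φ (X n ω) ∂P) * (∫ ω, ψ (Y n ω) ∂P)) := by ring
    rw [hsplit]
    refine ((abs_add_le _ _).trans ?_)
    rw [abs_neg]
    nlinarith [t1, t2, hδ2, hδpos.le, hδ1]
  -- conclude
  have hS2 := (NormedAddCommGroup.tendsto_nhds_zero.mp hS) (ε/2) (half_pos hε)
  filter_upwards [hS2] with n hn
  rw [Real.norm_eq_abs] at hn ⊢
  have h1 := hclose n
  calc |(∫ ω, f (X n ω) * g (Y n ω) ∂P) - (∫ ω, f (X n ω) ∂P) * ∫ ω, g (Y n ω) ∂P|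
      = |(((∫ ω, f (X n ω) * g (Y n ω) ∂P)
          - (∫ ω, f (X n ω) ∂P) * ∫ ω, g (Y n ω) ∂P) - S n) + S n| := by
        rw [sub_add_cancel]
    _ ≤ |((∫ ω, f (X n ω) * g (Y n ω) ∂P)
          - (∫ ω, f (X n ω) ∂P) * ∫ ω, g (Y n ω) ∂P) - S n| + |S n| := abs_add_le _ _
    _ < ε/2 + ε/2 := add_lt_add_of_le_of_lt h1 hn
    _ = ε := add_halves ε
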